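/- arXiv:1207.5908 — 2 statements merged into one kernel-verified Lean document; each statement's English description precedes it below -/
import Mathlib

section
/- Drift bound transfer: let Δ be the generator drift operator of a birth-death process on Z_+^N with bounded rates, and suppose F : Z_+^N → R_+ satisfies |F(x ± e_i) − F(x)| ≤ c for all x, i, and ΔF(x) ≤ −γ̃ for all |x| > K, and |ΔF(x)| ≤ C for all x, with γ̃, c, C > 0. Then for G(x) = exp(δ F(x)) with δ > 0 small enough, there exist γ > 0 and K' such that ΔG(x) ≤ −γ G(x) for all |x| > K'. -/
set_option maxHeartbeats 1000000

theorem exp_sub_one_le' (t : ℝ) (ht : |t| ≤ 1) : Real.exp t - 1 ≤ t + t ^ 2 := by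
  have h := Real.exp_bound ht (n := 2) (by norm_num)
  have hsum : ∑ m ∈ Finset.range 2, t ^ m / m.factorial = 1 + t := by
    simp [Finset.sum_range_succ]
  rw [hsum] at h
  have h1 := (abs_sub_le_iff.1 h).1
  have h2 : |t| ^ 2 = t ^ 2 := sq_abs t
  rw [h2] at h1
  norm_num [Nat.factorial] at h1
  nlinarith [sq_nonneg t]



/-- drift bound transfer. If `F ≥ 0` has bounded increments,
bounded drift, and drift `≤ −γ̃` outside a ball, then for small `δ > 0` the
function `G = exp(δ F)` satisfies a geometric drift inequality
`ΔG(x) ≤ −γ G(x)` outside a (possibly larger) ball. -/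
theorem exponential_drift_transfer (N : ℕ)
    (lam : Fin N → ℝ) (φ : (Fin N → ℕ) → Fin N → ℝ) (M : ℝ)
    (hrates : ∀ i, 0 ≤ lam i ∧ lam i ≤ M)
    (hφ : ∀ x i, 0 ≤ φ x i ∧ φ x i ≤ M)
    (hφ0 : ∀ (x : Fin N → ℕ) i, x i = 0 → φ x i = 0)
    (Δ : ((Fin N → ℕ) → ℝ) → (Fin N → ℕ) → ℝ)
    (hΔ : ∀ f x, Δ f x =
      (∑ i, lam i * (f (x + Pi.single i 1) - f x)) +
      ∑ i, φ x i * (f (x - Pi.single i 1) - f x))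
    (F : (Fin N → ℕ) → ℝ) (hFpos : ∀ x, 0 ≤ F x)
    (c : ℝ) (hc : 0 < c)
    (hinc : ∀ (x : Fin N → ℕ) i, |F (x + Pi.single i 1) - F x| ≤ c ∧
      |F (x - Pi.single i 1) - F x| ≤ c)
    (γ' C K : ℝ) (hγ' : 0 < γ') (hC : 0 < C)
    (hdrift : ∀ x : Fin N → ℕ, K < ∑ i, (x i : ℝ) → Δ F x ≤ -γ')
    (hbdd : ∀ x, |Δ F x| ≤ C) :
    ∃ δ γ K' : ℝ, 0 < δ ∧ 0 < γ ∧
      ∀ x : Fin N → ℕ, K' < ∑ i, (x i : ℝ) →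
        Δ (fun y => Real.exp (δ * F y)) x ≤ -γ * Real.exp (δ * F x) := by
  set M' : ℝ := max M 0 with hM'
  have hM'0 : 0 ≤ M' := le_max_right _ _
  set B : ℝ := 2 * N * M' * c ^ 2 + 1 with hB
  have hB0 : 0 < B := by positivity
  set δ : ℝ := min (1 / c) (γ' / (2 * B)) with hδdef
  have hδ0 : 0 < δ := lt_min (by positivity) (by positivity)
  have hδc : δ * c ≤ 1 := by
    have := min_le_left (1 / c) (γ' / (2 * B))
    calc δ * c ≤ (1 / c) * c := by nlinarith
    _ = 1 := by field_simp
  have hδB : δ * (2 * N * M' * c ^ 2) ≤ γ' / 2 := by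
    have h1 : δ ≤ γ' / (2 * B) := min_le_right _ _
    have h2 : 2 * (N : ℝ) * M' * c ^ 2 ≤ B := by simp [hB]
    have h3 : 0 ≤ 2 * (N : ℝ) * M' * c ^ 2 := by positivity
    calc δ * (2 * N * M' * c ^ 2) ≤ (γ' / (2 * B)) * B := by nlinarith
    _ = γ' / 2 := by field_simp
  refine ⟨δ, δ * γ' / 2, max K 0, hδ0, by positivity, fun x hx => ?_⟩
  have hxK : K < ∑ i, (x i : ℝ) := lt_of_le_of_lt (le_max_left _ _) hx
  have hF := hdrift x hxK
  set eF : ℝ := Real.exp (δ * F x) with heF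
  have heF0 : 0 < eF := Real.exp_pos _
  -- key pointwise bound
  have key : ∀ w : ℝ, |w| ≤ c →
      Real.exp (δ * (F x + w)) - eF ≤ eF * (δ * w + δ ^ 2 * c ^ 2) := by
    intro w hw
    have ht : |δ * w| ≤ 1 := by
      rw [abs_mul, abs_of_pos hδ0]
      calc δ * |w| ≤ δ * c := by nlinarith
      _ ≤ 1 := hδc
    have h1 : Real.exp (δ * w) - 1 ≤ δ * w + (δ * w) ^ 2 := exp_sub_one_le' _ ht
    have h2 : (δ * w) ^ 2 ≤ δ ^ 2 * c ^ 2 := by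
      have hw2 : w ^ 2 ≤ c ^ 2 := by nlinarith [sq_abs w, abs_nonneg w]
      nlinarith [sq_nonneg δ]
    have h3 : Real.exp (δ * (F x + w)) = eF * Real.exp (δ * w) := by
      rw [heF, ← Real.exp_add]; ring_nf
    rw [h3]
    calc eF * Real.exp (δ * w) - eF = eF * (Real.exp (δ * w) - 1) := by ring
    _ ≤ eF * (δ * w + δ ^ 2 * c ^ 2) := by nlinarith
  -- bound each summand
  have hsum1 : ∀ i, lam i * (Real.exp (δ * F (x + Pi.single i 1)) - eF) ≤
      lam i * (eF * (δ * (F (x + Pi.single i 1) - F x) + δ ^ 2 * c ^ 2)) := by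
    intro i
    refine mul_le_mul_of_nonneg_left ?_ (hrates i).1
    have := key (F (x + Pi.single i 1) - F x) (hinc x i).1
    have e : F x + (F (x + Pi.single i 1) - F x) = F (x + Pi.single i 1) := by ring
    rw [e] at this; exact this
  have hsum2 : ∀ i, φ x i * (Real.exp (δ * F (x - Pi.single i 1)) - eF) ≤
      φ x i * (eF * (δ * (F (x - Pi.single i 1) - F x) + δ ^ 2 * c ^ 2)) := by
    intro i
    refine mul_le_mul_of_nonneg_left ?_ (hφ x i).1
    have := key (F (x - Pi.single i 1) - F x) (hinc x i).2
    have e : F x + (F (x - Pi.single i 1) - F x) = F (x - Pi.single i 1) := by ring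
    rw [e] at this; exact this
  rw [hΔ]
  have step1 : (∑ i, lam i * (Real.exp (δ * F (x + Pi.single i 1)) - eF)) +
      ∑ i, φ x i * (Real.exp (δ * F (x - Pi.single i 1)) - eF) ≤
      eF * δ * ((∑ i, lam i * (F (x + Pi.single i 1) - F x)) +
        ∑ i, φ x i * (F (x - Pi.single i 1) - F x)) +
      eF * δ ^ 2 * c ^ 2 * ((∑ i, lam i) + ∑ i, φ x i) := by
    have h1 : (∑ i, lam i * (Real.exp (δ * F (x + Pi.single i 1)) - eF)) ≤
        ∑ i, lam i * (eF * (δ * (F (x + Pi.single i 1) - F x) + δ ^ 2 * c ^ 2)) :=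
      Finset.sum_le_sum fun i _ => hsum1 i
    have h2 : (∑ i, φ x i * (Real.exp (δ * F (x - Pi.single i 1)) - eF)) ≤
        ∑ i, φ x i * (eF * (δ * (F (x - Pi.single i 1) - F x) + δ ^ 2 * c ^ 2)) :=
      Finset.sum_le_sum fun i _ => hsum2 i
    have e1 : (∑ i, lam i * (eF * (δ * (F (x + Pi.single i 1) - F x) + δ ^ 2 * c ^ 2)))
        = eF * δ * (∑ i, lam i * (F (x + Pi.single i 1) - F x)) +
          eF * δ ^ 2 * c ^ 2 * (∑ i, lam i) := by
      rw [Finset.mul_sum, Finset.mul_sum, ← Finset.sum_add_distrib]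
      exact Finset.sum_congr rfl fun i _ => by ring
    have e2 : (∑ i, φ x i * (eF * (δ * (F (x - Pi.single i 1) - F x) + δ ^ 2 * c ^ 2)))
        = eF * δ * (∑ i, φ x i * (F (x - Pi.single i 1) - F x)) +
          eF * δ ^ 2 * c ^ 2 * (∑ i, φ x i) := by
      rw [Finset.mul_sum, Finset.mul_sum, ← Finset.sum_add_distrib]
      exact Finset.sum_congr rfl fun i _ => by ring
    calc _ ≤ (∑ i, lam i * (eF * (δ * (F (x + Pi.single i 1) - F x) + δ ^ 2 * c ^ 2))) +
        ∑ i, φ x i * (eF * (δ * (F (x - Pi.single i 1) - F x) + δ ^ 2 * c ^ 2)) :=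
        add_le_add h1 h2
    _ = _ := by rw [e1, e2]; ring
  have hrate1 : (∑ i, lam i) ≤ N * M' := by
    calc (∑ i, lam i) ≤ ∑ _i : Fin N, M' :=
      Finset.sum_le_sum fun i _ => le_max_of_le_left (hrates i).2
    _ = N * M' := by simp [Finset.sum_const]
  have hrate2 : (∑ i, φ x i) ≤ N * M' := by
    calc (∑ i, φ x i) ≤ ∑ _i : Fin N, M' :=
      Finset.sum_le_sum fun i _ => le_max_of_le_left (hφ x i).2
    _ = N * M' := by simp [Finset.sum_const]
  have hΔF : (∑ i, lam i * (F (x + Pi.single i 1) - F x)) +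
      ∑ i, φ x i * (F (x - Pi.single i 1) - F x) = Δ F x := (hΔ F x).symm
  calc (∑ i, lam i * (Real.exp (δ * F (x + Pi.single i 1)) - eF)) +
      ∑ i, φ x i * (Real.exp (δ * F (x - Pi.single i 1)) - eF)
      ≤ eF * δ * (Δ F x) + eF * δ ^ 2 * c ^ 2 * ((∑ i, lam i) + ∑ i, φ x i) := by
        rw [← hΔF]; exact step1
    _ ≤ eF * δ * (-γ') + eF * δ ^ 2 * c ^ 2 * (2 * N * M') := by
        have h4 : 0 ≤ eF * δ ^ 2 * c ^ 2 := by positivity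
        have h5 : (∑ i, lam i) + ∑ i, φ x i ≤ 2 * N * M' := by linarith
        have h6 : eF * δ * Δ F x ≤ eF * δ * (-γ') := by
          have : 0 ≤ eF * δ := by positivity
          exact mul_le_mul_of_nonneg_left hF this
        nlinarith
    _ ≤ -(δ * γ' / 2) * eF := by
        nlinarith [mul_le_mul_of_nonneg_left hδB (le_of_lt (mul_pos heF0 hδ0)), heF0, hδ0]
    _ = -(δ * γ' / 2) * Real.exp (δ * F x) := rfl
end

section
/- Let π be a probability measure on Z_+^N that is the stationary distribution of a birth-death process with birth rates λ_i > 0 and death rates bounded above by φ̄ < ∞. Then for every x ∈ Z_+^N and n ∈ N, π({y : y ≥ nx}) ≥ K_1 (λ_min/φ̄)^{n|x|} for some constant K_1 > 0 independent of n, where λ_min = min_i λ_i and y ≥ nx means coordinatewise. -/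
open scoped ENNReal Classical

namespace Stat14

variable {N : ℕ}

/-- reindexing a tsum along the shift `y ↦ y + e_i`. -/
lemma tsum_shift (f : (Fin N → ℕ) → ℝ≥0∞) (i : Fin N) :
    ∑' y : Fin N → ℕ, f (y + Pi.single i 1) = ∑' y : Fin N → ℕ, if 1 ≤ y i then f y else 0 := by
  have hinj : Function.Injective (fun y : Fin N → ℕ => y + Pi.single i 1) := by
    intro a b h; simpa using h
  have hr : Set.range (fun y : Fin N → ℕ => y + Pi.single i 1) = {y | 1 ≤ y i} := by
    ext y; constructor
    · rintro ⟨z, rfl⟩; simp [Pi.single_apply]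
    · intro hy
      simp only [Set.mem_setOf_eq] at hy
      refine ⟨y - Pi.single i 1, funext fun j => ?_⟩
      by_cases hj : j = i
      · subst hj; simp [Pi.single_apply]; omega
      · simp [hj, Pi.single_apply]
  have := hinj.tsum_eq (f := fun y => if 1 ≤ y i then f y else 0) ?_
  · rw [← this]
    refine tsum_congr fun y => ?_
    simp [Pi.single_apply]
  · intro y hy
    rw [hr]
    simp only [Function.mem_support, ne_eq, ite_eq_right_iff, not_forall] at hy
    exact hy.1

lemma add_single_sub (y : Fin N → ℕ) (i : Fin N) :
    (y + Pi.single i 1 : Fin N → ℕ) - Pi.single i 1 = y := by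
  funext j
  show y j + (Pi.single i 1 : Fin N → ℕ) j - (Pi.single i 1 : Fin N → ℕ) j = y j
  omega

lemma add_single_apply (y : Fin N → ℕ) (i : Fin N) : (y + Pi.single i 1 : Fin N → ℕ) i = y i + 1 := by
  simp [Pi.single_apply]

/-- tail mass at level `v`. -/
noncomputable def Θ (p : (Fin N → ℕ) → ℝ≥0∞) (v : Fin N → ℕ) : ℝ≥0∞ :=
  ∑' y : Fin N → ℕ, if ∀ j, v j ≤ y j then p y else 0

/-- the face `{y ≥ v, y i = v i}`. -/
noncomputable def Face (p : (Fin N → ℕ) → ℝ≥0∞) (v : Fin N → ℕ) (i : Fin N) : ℝ≥0∞ :=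
  ∑' y : Fin N → ℕ, if (∀ j, v j ≤ y j) ∧ y i = v i then p y else 0

/-- the slab `{y : y j ≥ v j (j ≠ i), y i = v i - 1}` (empty when `v i = 0`). -/
noncomputable def Gap (p : (Fin N → ℕ) → ℝ≥0∞) (v : Fin N → ℕ) (i : Fin N) : ℝ≥0∞ :=
  ∑' y : Fin N → ℕ, if (∀ j, j ≠ i → v j ≤ y j) ∧ y i + 1 = v i then p y else 0

lemma Θ_sub_eq (p : (Fin N → ℕ) → ℝ≥0∞) (v : Fin N → ℕ) (i : Fin N) :
    Θ p ((v : Fin N → ℕ) - Pi.single i 1) = Θ p v + Gap p v i := by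
  unfold Θ Gap
  rw [← ENNReal.tsum_add]
  refine tsum_congr fun y => ?_
  have hsing : ∀ j, (Pi.single i 1 : Fin N → ℕ) j = if j = i then 1 else 0 := fun j =>
    Pi.single_apply i 1 j
  have hs : ∀ j, (v - Pi.single i 1 : Fin N → ℕ) j = v j - (if j = i then 1 else 0) :=
    fun j => by rw [← hsing j]; rfl
  by_cases hA : ∀ j, v j ≤ y j
  · have h1 : ∀ j, (v - Pi.single i 1 : Fin N → ℕ) j ≤ y j := by
      intro j; rw [hs]; exact le_trans (Nat.sub_le _ _) (hA j)
    have h2 : ¬((∀ j, j ≠ i → v j ≤ y j) ∧ y i + 1 = v i) := by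
      rintro ⟨-, h⟩; have := hA i; omega
    rw [if_pos h1, if_pos hA, if_neg h2, add_zero]
  · by_cases hG : (∀ j, j ≠ i → v j ≤ y j) ∧ y i + 1 = v i
    · have h1 : ∀ j, (v - Pi.single i 1 : Fin N → ℕ) j ≤ y j := by
        intro j; rw [hs]
        split_ifs with hj
        · subst hj; have := hG.2; omega
        · have := hG.1 j hj; omega
      rw [if_pos h1, if_neg hA, if_pos hG, zero_add]
    · have h1 : ¬∀ j, (v - Pi.single i 1 : Fin N → ℕ) j ≤ y j := by
        intro h
        push_neg at hA
        obtain ⟨j, hj⟩ := hA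
        by_cases hji : j = i
        · subst hji
          apply hG
          have hii := h j
          rw [hs, if_pos rfl] at hii
          refine ⟨fun k hk => ?_, by omega⟩
          have hkk := h k
          rw [hs, if_neg hk] at hkk
          omega
        · have hjj := h j
          rw [hs, if_neg hji] at hjj
          omega
      rw [if_neg h1, if_neg hA, if_neg hG, add_zero]

lemma Θ_eq_add_face (p : (Fin N → ℕ) → ℝ≥0∞) (v : Fin N → ℕ) (i : Fin N) :
    Θ p v = Θ p ((v : Fin N → ℕ) + Pi.single i 1) + Face p v i := by
  unfold Θ Face
  rw [← ENNReal.tsum_add]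
  refine tsum_congr fun y => ?_
  have hsing : ∀ j, (Pi.single i 1 : Fin N → ℕ) j = if j = i then 1 else 0 := fun j =>
    Pi.single_apply i 1 j
  have hs : ∀ j, (v + Pi.single i 1 : Fin N → ℕ) j = v j + (if j = i then 1 else 0) :=
    fun j => by rw [← hsing j]; rfl
  by_cases hA : ∀ j, v j ≤ y j
  · by_cases hi : y i = v i
    · have h1 : ¬∀ j, (v + Pi.single i 1 : Fin N → ℕ) j ≤ y j := by
        intro h; have := h i; rw [hs, if_pos rfl] at this; omega
      rw [if_pos hA, if_neg h1, if_pos ⟨hA, hi⟩, zero_add]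
    · have h1 : ∀ j, (v + Pi.single i 1 : Fin N → ℕ) j ≤ y j := by
        intro j; rw [hs]
        by_cases hj : j = i
        · subst hj; rw [if_pos rfl]; have := hA j; omega
        · rw [if_neg hj]; have := hA j; omega
      rw [if_pos hA, if_pos h1, if_neg (fun h => hi h.2), add_zero]
  · have h1 : ¬∀ j, (v + Pi.single i 1 : Fin N → ℕ) j ≤ y j := by
      intro h; apply hA; intro j
      have := h j; rw [hs] at this; omega
    rw [if_neg hA, if_neg h1, if_neg (fun h => hA h.1), add_zero]

lemma Gap_eq_zero (p : (Fin N → ℕ) → ℝ≥0∞) (v : Fin N → ℕ) (i : Fin N) (hv : v i = 0) :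
    Gap p v i = 0 := by
  unfold Gap
  refine ENNReal.tsum_eq_zero.mpr fun y => ?_
  rw [if_neg]; rintro ⟨-, h⟩; omega

lemma tsum_shift' (f : (Fin N → ℕ) → ℝ≥0∞) (i : Fin N) :
    ∑' y : Fin N → ℕ, f (y + Pi.single i 1) = ∑' y : Fin N → ℕ, if 1 ≤ y i then f y else 0 := by
  have hinj : Function.Injective (fun y : Fin N → ℕ => y + Pi.single i 1) := by
    intro a b h; simpa using h
  have hr : Set.range (fun y : Fin N → ℕ => y + Pi.single i 1) = {y | 1 ≤ y i} := by
    ext y; constructor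
    · rintro ⟨z, rfl⟩; simp [Pi.single_apply]
    · intro hy
      simp only [Set.mem_setOf_eq] at hy
      refine ⟨y - Pi.single i 1, funext fun j => ?_⟩
      by_cases hj : j = i
      · subst hj; simp [Pi.single_apply]; omega
      · simp [hj, Pi.single_apply]
  have := hinj.tsum_eq (f := fun y => if 1 ≤ y i then f y else 0) ?_
  · rw [← this]
    refine tsum_congr fun y => ?_
    simp [Pi.single_apply]
  · intro y hy
    rw [hr]
    simp only [Function.mem_support, ne_eq, ite_eq_right_iff, not_forall] at hy
    exact hy.1

lemma tsum_ite_mul_le (p : (Fin N → ℕ) → ℝ≥0∞) (q : (Fin N → ℕ) → ℝ≥0∞) (B : ℝ≥0∞)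
    (hq : ∀ y, q y ≤ B) (c : (Fin N → ℕ) → Prop) [DecidablePred c] :
    (∑' y : Fin N → ℕ, if c y then p y * q y else 0) ≤ B * ∑' y : Fin N → ℕ, if c y then p y else 0 := by
  rw [← ENNReal.tsum_mul_left]
  refine ENNReal.tsum_le_tsum fun y => ?_
  by_cases h : c y
  · rw [if_pos h, if_pos h, mul_comm]
    exact mul_le_mul' (hq y) le_rfl
  · simp [h]

lemma tsum_ite_le_total (p : (Fin N → ℕ) → ℝ≥0∞) (c : (Fin N → ℕ) → Prop) [DecidablePred c] :
    (∑' y : Fin N → ℕ, if c y then p y else 0) ≤ ∑' y : Fin N → ℕ, p y :=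
  ENNReal.tsum_le_tsum fun y => by by_cases h : c y <;> simp [h]

lemma Θ_le_total (p : (Fin N → ℕ) → ℝ≥0∞) (v : Fin N → ℕ) : Θ p v ≤ ∑' y : Fin N → ℕ, p y :=
  tsum_ite_le_total p _

lemma cut (p : (Fin N → ℕ) → ℝ≥0∞) (F : (Fin N → ℕ) → Fin N → ℝ≥0∞) (L : Fin N → ℝ≥0∞)
    (B : ℝ≥0∞) (hB : B ≠ ⊤) (hp : ∑' y : Fin N → ℕ, p y ≠ ⊤) (hL : ∀ i, L i ≠ ⊤)
    (hFbar : ∀ y i, F y i ≤ B)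
    (hF0 : ∀ y i, y i = 0 → F y i = 0)
    (hbal : ∀ y : Fin N → ℕ, p y * ((∑ i, L i) + ∑ i, F y i) =
      (∑ i, p (y + Pi.single i 1) * F (y + Pi.single i 1) i) +
      ∑ i, if 1 ≤ y i then p (y - Pi.single i 1) * L i else 0)
    (v : Fin N → ℕ) :
    ∑ i ∈ Finset.univ.filter (fun i => 1 ≤ v i), L i * Gap p v i ≤
      B * ∑ i ∈ Finset.univ.filter (fun i => 1 ≤ v i), Face p v i := by
  have hΛ : (∑ i, L i) ≠ ⊤ :=
    (ENNReal.sum_lt_top.mpr fun i _ => lt_top_iff_ne_top.mpr (hL i)).ne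
  have hΘfin : Θ p v ≠ ⊤ := fun h => hp (top_le_iff.mp (h ▸ Θ_le_total p v))
  have hE'le : ∀ i, (∑' y : Fin N → ℕ, if (∀ j, v j ≤ y j) ∧ v i + 1 ≤ y i then p y * F y i else 0)
      ≤ B * ∑' y : Fin N → ℕ, p y := fun i =>
    le_trans (tsum_ite_mul_le p (fun y => F y i) B (fun y => hFbar y i) _)
      (mul_le_mul' le_rfl (tsum_ite_le_total p _))
  have hE'fin : ∀ i, (∑' y : Fin N → ℕ, if (∀ j, v j ≤ y j) ∧ v i + 1 ≤ y i then p y * F y i else 0) ≠ ⊤ :=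
    fun i h => (ENNReal.mul_ne_top hB hp) (top_le_iff.mp (h ▸ hE'le i))
  have hSEfin : (∑ i, ∑' y : Fin N → ℕ, if (∀ j, v j ≤ y j) ∧ v i + 1 ≤ y i then p y * F y i else 0) ≠ ⊤ :=
    (ENNReal.sum_lt_top.mpr fun i _ => lt_top_iff_ne_top.mpr (hE'fin i)).ne
  have h1 : ∑' y : Fin N → ℕ, (if ∀ j, v j ≤ y j then p y * ((∑ i, L i) + ∑ i, F y i) else 0)
      = ∑' y : Fin N → ℕ, (if ∀ j, v j ≤ y j then
          ((∑ i, p (y + Pi.single i 1) * F (y + Pi.single i 1) i) +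
            ∑ i, if 1 ≤ y i then p (y - Pi.single i 1) * L i else 0) else 0) :=
    tsum_congr fun y => by
      by_cases h : ∀ j, v j ≤ y j
      · rw [if_pos h, if_pos h, hbal y]
      · rw [if_neg h, if_neg h]
  have h2 : ∑' y : Fin N → ℕ, (if ∀ j, v j ≤ y j then p y * ((∑ i, L i) + ∑ i, F y i) else 0)
      = (∑ i, L i) * Θ p v + ∑ i, ∑' y : Fin N → ℕ, (if ∀ j, v j ≤ y j then p y * F y i else 0) := by
    have hpt : ∀ y : Fin N → ℕ, (if ∀ j, v j ≤ y j then p y * ((∑ i, L i) + ∑ i, F y i) else 0)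
        = (∑ i, L i) * (if ∀ j, v j ≤ y j then p y else 0)
          + ∑ i, (if ∀ j, v j ≤ y j then p y * F y i else 0) := by
      intro y
      by_cases h : ∀ j, v j ≤ y j
      · simp only [if_pos h]
        rw [mul_add]
        congr 1
        · rw [mul_comm]
        · rw [Finset.mul_sum]
      · simp [h]
    rw [tsum_congr hpt, ENNReal.tsum_add, ENNReal.tsum_mul_left,
      Summable.tsum_finsetSum (fun i _ => ENNReal.summable)]
    rfl
  have h3 : ∑' y : Fin N → ℕ, (if ∀ j, v j ≤ y j then
          ((∑ i, p (y + Pi.single i 1) * F (y + Pi.single i 1) i) +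
            ∑ i, if 1 ≤ y i then p (y - Pi.single i 1) * L i else 0) else 0)
      = (∑ i, ∑' y : Fin N → ℕ, (if ∀ j, v j ≤ y j then p (y + Pi.single i 1) * F (y + Pi.single i 1) i else 0))
        + ∑ i, ∑' y : Fin N → ℕ, (if (∀ j, v j ≤ y j) ∧ 1 ≤ y i then p (y - Pi.single i 1) * L i else 0) := by
    have hpt : ∀ y : Fin N → ℕ, (if ∀ j, v j ≤ y j then
          ((∑ i, p (y + Pi.single i 1) * F (y + Pi.single i 1) i) +
            ∑ i, if 1 ≤ y i then p (y - Pi.single i 1) * L i else 0) else 0)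
        = (∑ i, (if ∀ j, v j ≤ y j then p (y + Pi.single i 1) * F (y + Pi.single i 1) i else 0))
          + ∑ i, (if (∀ j, v j ≤ y j) ∧ 1 ≤ y i then p (y - Pi.single i 1) * L i else 0) := by
      intro y
      by_cases h : ∀ j, v j ≤ y j
      · rw [if_pos h]
        congr 1
        · exact (Finset.sum_congr rfl fun i _ => (if_pos h).symm)
        · refine Finset.sum_congr rfl fun i _ => ?_
          by_cases hy : 1 ≤ y i
          · rw [if_pos hy, if_pos ⟨h, hy⟩]
          · rw [if_neg hy, if_neg (fun hc => hy hc.2)]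
      · simp [h]
    rw [tsum_congr hpt, ENNReal.tsum_add, Summable.tsum_finsetSum (fun i _ => ENNReal.summable),
      Summable.tsum_finsetSum (fun i _ => ENNReal.summable)]
  have h4 : ∀ i, (∑' y : Fin N → ℕ, (if ∀ j, v j ≤ y j then p (y + Pi.single i 1) * F (y + Pi.single i 1) i else 0))
      = ∑' y : Fin N → ℕ, (if (∀ j, v j ≤ y j) ∧ v i + 1 ≤ y i then p y * F y i else 0) := by
    intro i
    have hfy : ∀ y : Fin N → ℕ,
        (fun z => if (∀ j, v j ≤ (z - Pi.single i 1 : Fin N → ℕ) j) ∧ 1 ≤ z i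
          then p z * F z i else 0) (y + Pi.single i 1)
        = if ∀ j, v j ≤ y j then p (y + Pi.single i 1) * F (y + Pi.single i 1) i else 0 := by
      intro y
      simp only [add_single_sub y i, add_single_apply y i]
      exact if_congr (and_iff_left (by omega)) rfl rfl
    calc ∑' y : Fin N → ℕ, (if ∀ j, v j ≤ y j then p (y + Pi.single i 1) * F (y + Pi.single i 1) i else 0)
        = ∑' y : Fin N → ℕ,
            (fun z => if (∀ j, v j ≤ (z - Pi.single i 1 : Fin N → ℕ) j) ∧ 1 ≤ z i
              then p z * F z i else 0) (y + Pi.single i 1) := tsum_congr fun y => (hfy y).symm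
      _ = ∑' y : Fin N → ℕ, if 1 ≤ y i then
            (if (∀ j, v j ≤ (y - Pi.single i 1 : Fin N → ℕ) j) ∧ 1 ≤ y i
              then p y * F y i else 0) else 0 :=
          tsum_shift' (fun z => if (∀ j, v j ≤ (z - Pi.single i 1 : Fin N → ℕ) j) ∧ 1 ≤ z i
            then p z * F z i else 0) i
      _ = ∑' y : Fin N → ℕ, (if (∀ j, v j ≤ y j) ∧ v i + 1 ≤ y i then p y * F y i else 0) := by
          refine tsum_congr fun y => ?_
          have hsub : ∀ j, (y - Pi.single i 1 : Fin N → ℕ) j = y j - (if j = i then 1 else 0) :=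
            fun j => by rw [← Pi.single_apply i (1 : ℕ) j]; rfl
          by_cases h1 : 1 ≤ y i
          · rw [if_pos h1]
            refine if_congr ?_ rfl rfl
            constructor
            · rintro ⟨h2, -⟩
              refine ⟨fun j => ?_, ?_⟩
              · have := h2 j; rw [hsub] at this
                by_cases hj : j = i
                · subst hj; rw [if_pos rfl] at this; omega
                · rw [if_neg hj] at this; omega
              · have := h2 i; rw [hsub, if_pos rfl] at this; omega
            · rintro ⟨h2, h3⟩
              refine ⟨fun j => ?_, h1⟩
              rw [hsub]
              by_cases hj : j = i
              · subst hj; rw [if_pos rfl]; omega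
              · rw [if_neg hj]; have := h2 j; omega
          · rw [if_neg h1, eq_comm, if_neg]
            rintro ⟨-, h3⟩; omega
  have h5 : ∀ i, (∑' y : Fin N → ℕ, (if (∀ j, v j ≤ y j) ∧ 1 ≤ y i then p (y - Pi.single i 1) * L i else 0))
      = L i * Θ p ((v : Fin N → ℕ) - Pi.single i 1) := by
    intro i
    have hcollapse : ∑' y : Fin N → ℕ, (if 1 ≤ y i then
          (if (∀ j, v j ≤ y j) ∧ 1 ≤ y i then p (y - Pi.single i 1) * L i else 0) else 0)
        = ∑' y : Fin N → ℕ, (if (∀ j, v j ≤ y j) ∧ 1 ≤ y i then p (y - Pi.single i 1) * L i else 0) :=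
      tsum_congr fun y => by
        by_cases h1 : 1 ≤ y i
        · rw [if_pos h1]
        · rw [if_neg h1, eq_comm, if_neg]
          rintro ⟨-, h⟩; omega
    have hgz : ∀ z : Fin N → ℕ,
        (fun y => if (∀ j, v j ≤ y j) ∧ 1 ≤ y i then p (y - Pi.single i 1) * L i else 0)
          (z + Pi.single i 1)
        = (if ∀ j, (v - Pi.single i 1 : Fin N → ℕ) j ≤ z j then p z else 0) * L i := by
      intro z
      have hadd : ∀ j, (z + Pi.single i 1 : Fin N → ℕ) j = z j + (if j = i then 1 else 0) :=
        fun j => by rw [← Pi.single_apply i (1 : ℕ) j]; rfl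
      have hsubv : ∀ j, (v - Pi.single i 1 : Fin N → ℕ) j = v j - (if j = i then 1 else 0) :=
        fun j => by rw [← Pi.single_apply i (1 : ℕ) j]; rfl
      have hcond : ((∀ j, v j ≤ (z + Pi.single i 1 : Fin N → ℕ) j)
            ∧ 1 ≤ (z + Pi.single i 1 : Fin N → ℕ) i)
          ↔ (∀ j, (v - Pi.single i 1 : Fin N → ℕ) j ≤ z j) := by
        constructor
        · rintro ⟨h2, -⟩ j
          have := h2 j; rw [hadd] at this; rw [hsubv]
          by_cases hj : j = i
          · subst hj; rw [if_pos rfl] at this ⊢; omega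
          · rw [if_neg hj] at this ⊢; omega
        · intro h2
          refine ⟨fun j => ?_, by rw [add_single_apply z i]; omega⟩
          have := h2 j; rw [hsubv] at this; rw [hadd]
          by_cases hj : j = i
          · subst hj; rw [if_pos rfl] at this ⊢; omega
          · rw [if_neg hj] at this ⊢; omega
      simp only [add_single_sub z i]
      by_cases h : ∀ j, (v - Pi.single i 1 : Fin N → ℕ) j ≤ z j
      · rw [if_pos (hcond.mpr h), if_pos h]
      · rw [if_neg (fun hc => h (hcond.mp hc)), if_neg h, zero_mul]
    calc ∑' y : Fin N → ℕ, (if (∀ j, v j ≤ y j) ∧ 1 ≤ y i then p (y - Pi.single i 1) * L i else 0)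
        = ∑' y : Fin N → ℕ, (if 1 ≤ y i then
            (if (∀ j, v j ≤ y j) ∧ 1 ≤ y i then p (y - Pi.single i 1) * L i else 0) else 0) :=
          hcollapse.symm
      _ = ∑' z : Fin N → ℕ,
            (fun y => if (∀ j, v j ≤ y j) ∧ 1 ≤ y i then p (y - Pi.single i 1) * L i else 0)
              (z + Pi.single i 1) :=
          (tsum_shift' (fun y => if (∀ j, v j ≤ y j) ∧ 1 ≤ y i
            then p (y - Pi.single i 1) * L i else 0) i).symm
      _ = ∑' z : Fin N → ℕ, (if ∀ j, (v - Pi.single i 1 : Fin N → ℕ) j ≤ z j then p z else 0) * L i :=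
          tsum_congr hgz
      _ = Θ p ((v : Fin N → ℕ) - Pi.single i 1) * L i := by rw [ENNReal.tsum_mul_right]; rfl
      _ = L i * Θ p ((v : Fin N → ℕ) - Pi.single i 1) := mul_comm _ _
  have h6 : ∀ i, (∑' y : Fin N → ℕ, (if ∀ j, v j ≤ y j then p y * F y i else 0))
      = (∑' y : Fin N → ℕ, (if (∀ j, v j ≤ y j) ∧ v i + 1 ≤ y i then p y * F y i else 0))
        + ∑' y : Fin N → ℕ, (if (∀ j, v j ≤ y j) ∧ y i = v i then p y * F y i else 0) := by
    intro i
    rw [← ENNReal.tsum_add]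
    refine tsum_congr fun y => ?_
    by_cases hA : ∀ j, v j ≤ y j
    · by_cases hi : y i = v i
      · rw [if_pos hA, if_neg (by rintro ⟨-, h⟩; omega), if_pos ⟨hA, hi⟩, zero_add]
      · have hgt : v i + 1 ≤ y i := by have := hA i; omega
        rw [if_pos hA, if_pos ⟨hA, hgt⟩, if_neg (fun h => hi h.2), add_zero]
    · rw [if_neg hA, if_neg (fun h => hA h.1), if_neg (fun h => hA h.1), add_zero]
  have grand : (∑ i, L i) * Θ p v
        + ∑ i, ∑' y : Fin N → ℕ, (if ∀ j, v j ≤ y j then p y * F y i else 0)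
      = (∑ i, ∑' y : Fin N → ℕ, (if (∀ j, v j ≤ y j) ∧ v i + 1 ≤ y i then p y * F y i else 0))
        + ((∑ i, L i) * Θ p v + ∑ i, L i * Gap p v i) := by
    rw [← h2, h1, h3]
    congr 1
    · exact Finset.sum_congr rfl fun i _ => h4 i
    · calc ∑ i, ∑' y : Fin N → ℕ, (if (∀ j, v j ≤ y j) ∧ 1 ≤ y i then p (y - Pi.single i 1) * L i else 0)
          = ∑ i, L i * Θ p ((v : Fin N → ℕ) - Pi.single i 1) :=
            Finset.sum_congr rfl fun i _ => h5 i
        _ = ∑ i, (L i * Θ p v + L i * Gap p v i) :=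
            Finset.sum_congr rfl fun i _ => by rw [Θ_sub_eq, mul_add]
        _ = (∑ i, L i * Θ p v) + ∑ i, L i * Gap p v i := Finset.sum_add_distrib
        _ = (∑ i, L i) * Θ p v + ∑ i, L i * Gap p v i := by rw [Finset.sum_mul]
  have hfinal : (∑ i, ∑' y : Fin N → ℕ, (if (∀ j, v j ≤ y j) ∧ y i = v i then p y * F y i else 0))
      = ∑ i, L i * Gap p v i := by
    have e1 : (∑ i, L i) * Θ p v
          + ((∑ i, ∑' y : Fin N → ℕ, (if (∀ j, v j ≤ y j) ∧ v i + 1 ≤ y i then p y * F y i else 0))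
            + ∑ i, ∑' y : Fin N → ℕ, (if (∀ j, v j ≤ y j) ∧ y i = v i then p y * F y i else 0))
        = (∑ i, L i) * Θ p v
          + ((∑ i, ∑' y : Fin N → ℕ, (if (∀ j, v j ≤ y j) ∧ v i + 1 ≤ y i then p y * F y i else 0))
            + ∑ i, L i * Gap p v i) := by
      calc (∑ i, L i) * Θ p v
            + ((∑ i, ∑' y : Fin N → ℕ, (if (∀ j, v j ≤ y j) ∧ v i + 1 ≤ y i then p y * F y i else 0))
              + ∑ i, ∑' y : Fin N → ℕ, (if (∀ j, v j ≤ y j) ∧ y i = v i then p y * F y i else 0))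
          = (∑ i, L i) * Θ p v
              + ∑ i, ∑' y : Fin N → ℕ, (if ∀ j, v j ≤ y j then p y * F y i else 0) := by
            rw [← Finset.sum_add_distrib]
            congr 1
            exact (Finset.sum_congr rfl fun i _ => (h6 i).symm)
        _ = (∑ i, ∑' y : Fin N → ℕ, (if (∀ j, v j ≤ y j) ∧ v i + 1 ≤ y i then p y * F y i else 0))
              + ((∑ i, L i) * Θ p v + ∑ i, L i * Gap p v i) := grand
        _ = (∑ i, L i) * Θ p v
              + ((∑ i, ∑' y : Fin N → ℕ, (if (∀ j, v j ≤ y j) ∧ v i + 1 ≤ y i then p y * F y i else 0))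
                + ∑ i, L i * Gap p v i) := by ring
    have e2 := (ENNReal.add_right_inj (ENNReal.mul_ne_top hΛ hΘfin)).mp e1
    exact (ENNReal.add_right_inj hSEfin).mp e2
  have hDzero : ∀ i, v i = 0 →
      (∑' y : Fin N → ℕ, (if (∀ j, v j ≤ y j) ∧ y i = v i then p y * F y i else 0)) = 0 := by
    intro i hv
    refine ENNReal.tsum_eq_zero.mpr fun y => ?_
    by_cases h : (∀ j, v j ≤ y j) ∧ y i = v i
    · rw [if_pos h, hF0 y i (by omega), mul_zero]
    · rw [if_neg h]
  have hnotmem : ∀ i, i ∉ Finset.univ.filter (fun i => 1 ≤ v i) → v i = 0 := by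
    intro i hni
    by_contra h
    exact hni (Finset.mem_filter.mpr ⟨Finset.mem_univ i, by omega⟩)
  calc ∑ i ∈ Finset.univ.filter (fun i => 1 ≤ v i), L i * Gap p v i
      = ∑ i, L i * Gap p v i :=
        Finset.sum_subset (Finset.filter_subset _ _) (fun i _ hni => by
          rw [Gap_eq_zero p v i (hnotmem i hni), mul_zero])
    _ = ∑ i, ∑' y : Fin N → ℕ, (if (∀ j, v j ≤ y j) ∧ y i = v i then p y * F y i else 0) := hfinal.symm
    _ = ∑ i ∈ Finset.univ.filter (fun i => 1 ≤ v i),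
          ∑' y : Fin N → ℕ, (if (∀ j, v j ≤ y j) ∧ y i = v i then p y * F y i else 0) :=
        (Finset.sum_subset (Finset.filter_subset _ _)
          (fun i _ hni => hDzero i (hnotmem i hni))).symm
    _ ≤ ∑ i ∈ Finset.univ.filter (fun i => 1 ≤ v i), B * Face p v i :=
        Finset.sum_le_sum fun i _ =>
          tsum_ite_mul_le p (fun y => F y i) B (fun y => hFbar y i) _
    _ = B * ∑ i ∈ Finset.univ.filter (fun i => 1 ≤ v i), Face p v i :=
        (Finset.mul_sum _ _ _).symm

end Stat14

open Stat14 in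
/-- lower bound for stationary tail probabilities. If `π` is a
stationary distribution of a birth-death process on `ℤ₊^N` with birth rates
`λ_i > 0` and death rates `φ_i(y) ≤ φ̄`, then
`π({y : y ≥ n x}) ≥ K₁ (λ_min/φ̄)^{n|x|}` with `K₁ > 0` independent of `n`. -/
theorem stationary_tail_lower_bound (N : ℕ)
    (lam : Fin N → ℝ) (hlam : ∀ i, 0 < lam i)
    (φ : (Fin N → ℕ) → Fin N → ℝ) (φbar : ℝ) (hφbar : 0 < φbar)
    (hφ : ∀ y i, 0 ≤ φ y i ∧ φ y i ≤ φbar)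
    (hφ0 : ∀ (y : Fin N → ℕ) i, y i = 0 → φ y i = 0)
    (hφpos : ∀ (y : Fin N → ℕ) i, 1 ≤ y i → 0 < φ y i)
    (π : (Fin N → ℕ) → ℝ) (hπpos : ∀ y, 0 ≤ π y)
    (hπsum : ∑' y : Fin N → ℕ, π y = 1)
    (hbalance : ∀ y : Fin N → ℕ,
      π y * ((∑ i, lam i) + ∑ i, φ y i) =
        (∑ i, π (y + Pi.single i 1) * φ (y + Pi.single i 1) i) +
        ∑ i, (if 1 ≤ y i then π (y - Pi.single i 1) * lam i else 0))
    (x : Fin N → ℕ) :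
    ∃ K₁ : ℝ, 0 < K₁ ∧ ∀ n : ℕ,
      K₁ * ((⨅ i, lam i) / φbar) ^ (n * ∑ i, x i) ≤
        ∑' y : {y : Fin N → ℕ // ∀ i, n * x i ≤ y i}, π y := by
  classical
  have hφnn : ∀ y i, 0 ≤ φ y i := fun y i => (hφ y i).1
  have hsummable : Summable π := by
    by_contra h
    rw [tsum_eq_zero_of_not_summable h] at hπsum
    norm_num at hπsum
  set p : (Fin N → ℕ) → ℝ≥0∞ := fun y => ENNReal.ofReal (π y) with hpdef
  have htotal : ∑' y : Fin N → ℕ, p y = 1 := by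
    rw [hpdef, ← ENNReal.ofReal_tsum_of_nonneg hπpos hsummable, hπsum, ENNReal.ofReal_one]
  have htne : (∑' y : Fin N → ℕ, p y) ≠ ⊤ := by rw [htotal]; exact ENNReal.one_ne_top
  -- lifted balance equation
  have hbalE : ∀ y : Fin N → ℕ,
      p y * ((∑ i, ENNReal.ofReal (lam i)) + ∑ i, ENNReal.ofReal (φ y i)) =
        (∑ i, p (y + Pi.single i 1) * ENNReal.ofReal (φ (y + Pi.single i 1) i)) +
        ∑ i, if 1 ≤ y i then p (y - Pi.single i 1) * ENNReal.ofReal (lam i) else 0 := by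
    intro y
    have e1 : p y * ((∑ i, ENNReal.ofReal (lam i)) + ∑ i, ENNReal.ofReal (φ y i))
        = ENNReal.ofReal (π y * ((∑ i, lam i) + ∑ i, φ y i)) := by
      rw [ENNReal.ofReal_mul (hπpos y)]
      congr 1
      rw [ENNReal.ofReal_add (Finset.sum_nonneg fun i _ => le_of_lt (hlam i))
        (Finset.sum_nonneg fun i _ => hφnn y i),
        ENNReal.ofReal_sum_of_nonneg (fun i _ => le_of_lt (hlam i)),
        ENNReal.ofReal_sum_of_nonneg (fun i _ => hφnn y i)]
    have e2 : ENNReal.ofReal ((∑ i, π (y + Pi.single i 1) * φ (y + Pi.single i 1) i) +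
          ∑ i, (if 1 ≤ y i then π (y - Pi.single i 1) * lam i else 0))
        = (∑ i, p (y + Pi.single i 1) * ENNReal.ofReal (φ (y + Pi.single i 1) i)) +
          ∑ i, if 1 ≤ y i then p (y - Pi.single i 1) * ENNReal.ofReal (lam i) else 0 := by
      rw [ENNReal.ofReal_add (Finset.sum_nonneg fun i _ =>
            mul_nonneg (hπpos _) (hφnn _ i))
          (Finset.sum_nonneg fun i _ => by
            by_cases h : 1 ≤ y i
            · rw [if_pos h]; exact mul_nonneg (hπpos _) (le_of_lt (hlam i))
            · rw [if_neg h]),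
        ENNReal.ofReal_sum_of_nonneg (fun i _ => mul_nonneg (hπpos _) (hφnn _ i)),
        ENNReal.ofReal_sum_of_nonneg (fun i _ => by
            by_cases h : 1 ≤ y i
            · rw [if_pos h]; exact mul_nonneg (hπpos _) (le_of_lt (hlam i))
            · rw [if_neg h])]
      congr 1
      · exact Finset.sum_congr rfl fun i _ => ENNReal.ofReal_mul (hπpos _)
      · refine Finset.sum_congr rfl fun i _ => ?_
        by_cases h : 1 ≤ y i
        · rw [if_pos h, if_pos h, ENNReal.ofReal_mul (hπpos _)]
        · rw [if_neg h, if_neg h, ENNReal.ofReal_zero]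
    rw [e1, hbalance y, e2]
  -- finiteness of tails
  have hΘfin : ∀ v, Θ p v ≠ ⊤ := fun v h => htne (top_le_iff.mp (h ▸ Θ_le_total p v))
  have hGapfin : ∀ v (i : Fin N), Gap p v i ≠ ⊤ := by
    intro v i h
    have := Θ_sub_eq p v i
    rw [h] at this
    exact hΘfin _ (by rw [this, add_top])
  have hFacefin : ∀ v (i : Fin N), Face p v i ≠ ⊤ := by
    intro v i h
    have := Θ_eq_add_face p v i
    rw [h] at this
    exact hΘfin v (by rw [this, add_top])
  -- real-valued tail function
  set T : (Fin N → ℕ) → ℝ := fun v => (Θ p v).toReal with hT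
  have hTnn : ∀ v, 0 ≤ T v := fun v => ENNReal.toReal_nonneg
  have hGnn : ∀ v (i : Fin N), 0 ≤ (Gap p v i).toReal := fun v i => ENNReal.toReal_nonneg
  have hFnn : ∀ v (i : Fin N), 0 ≤ (Face p v i).toReal := fun v i => ENNReal.toReal_nonneg
  have hTsub : ∀ v (i : Fin N), T ((v : Fin N → ℕ) - Pi.single i 1) = T v + (Gap p v i).toReal := by
    intro v i
    rw [hT]
    simp only []
    rw [Θ_sub_eq p v i, ENNReal.toReal_add (hΘfin v) (hGapfin v i)]
  have hTface : ∀ v (i : Fin N), T v = T ((v : Fin N → ℕ) + Pi.single i 1) + (Face p v i).toReal := by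
    intro v i
    rw [hT]
    simp only []
    rw [Θ_eq_add_face p v i, ENNReal.toReal_add (hΘfin _) (hFacefin v i)]
  have hT0 : T (fun _ => 0) = 1 := by
    rw [hT]
    simp only []
    have : Θ p (fun _ => 0) = 1 := by
      rw [← htotal]
      exact tsum_congr fun y => if_pos fun j => Nat.zero_le _
    rw [this, ENNReal.toReal_one]
  -- the key inequality from the cut lemma
  have hKEY : ∀ v : Fin N → ℕ,
      ∑ i ∈ Finset.univ.filter (fun i => 1 ≤ v i), lam i * (Gap p v i).toReal
        ≤ φbar * ∑ i ∈ Finset.univ.filter (fun i => 1 ≤ v i), (Face p v i).toReal := by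
    intro v
    have hc := cut p (fun y i => ENNReal.ofReal (φ y i)) (fun i => ENNReal.ofReal (lam i))
      (ENNReal.ofReal φbar) ENNReal.ofReal_ne_top htne (fun i => ENNReal.ofReal_ne_top)
      (fun y i => ENNReal.ofReal_le_ofReal (hφ y i).2)
      (fun y i h => by show ENNReal.ofReal (φ y i) = 0; rw [hφ0 y i h, ENNReal.ofReal_zero]) hbalE v
    have hrfin : ENNReal.ofReal φbar *
        ∑ i ∈ Finset.univ.filter (fun i => 1 ≤ v i), Face p v i ≠ ⊤ :=
      ENNReal.mul_ne_top ENNReal.ofReal_ne_top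
        (ENNReal.sum_lt_top.mpr fun i _ => lt_top_iff_ne_top.mpr (hFacefin v i)).ne
    have h2 := ENNReal.toReal_mono hrfin hc
    rw [ENNReal.toReal_mul, ENNReal.toReal_sum (fun i _ =>
        ENNReal.mul_ne_top ENNReal.ofReal_ne_top (hGapfin v i)),
      ENNReal.toReal_sum (fun i _ => hFacefin v i),
      ENNReal.toReal_ofReal (le_of_lt hφbar)] at h2
    calc ∑ i ∈ Finset.univ.filter (fun i => 1 ≤ v i), lam i * (Gap p v i).toReal
        = ∑ i ∈ Finset.univ.filter (fun i => 1 ≤ v i),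
            (ENNReal.ofReal (lam i) * Gap p v i).toReal := by
          refine Finset.sum_congr rfl fun i _ => ?_
          rw [ENNReal.toReal_mul, ENNReal.toReal_ofReal (le_of_lt (hlam i))]
        _ ≤ φbar * ∑ i ∈ Finset.univ.filter (fun i => 1 ≤ v i), (Face p v i).toReal := h2
  have hsing : ∀ (i : Fin N) (a : ℕ) (j : Fin N),
      (Pi.single i a : Fin N → ℕ) j = if j = i then a else 0 := fun i a j => Pi.single_apply i a j
  have hrlt : ∀ i : Fin N, lam i < φbar := by
    intro i
    by_contra hge
    push_neg at hge
    have hsingle_sub : ∀ k : ℕ,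
        (Pi.single i (k+1) : Fin N → ℕ) - Pi.single i 1 = Pi.single i k := by
      intro k; funext j
      show (Pi.single i (k+1) : Fin N → ℕ) j - (Pi.single i 1 : Fin N → ℕ) j
        = (Pi.single i k : Fin N → ℕ) j
      rw [hsing, hsing, hsing]
      split_ifs <;> omega
    have hsingle_add : ∀ k : ℕ,
        (Pi.single i k : Fin N → ℕ) + Pi.single i 1 = Pi.single i (k+1) := by
      intro k; funext j
      show (Pi.single i k : Fin N → ℕ) j + (Pi.single i 1 : Fin N → ℕ) j
        = (Pi.single i (k+1) : Fin N → ℕ) j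
      rw [hsing, hsing, hsing]
      split_ifs <;> omega
    have hfilter : ∀ k : ℕ, Finset.univ.filter
        (fun j => 1 ≤ (Pi.single i (k+1) : Fin N → ℕ) j) = {i} := by
      intro k
      ext j
      simp only [Finset.mem_filter, Finset.mem_univ, true_and, Finset.mem_singleton]
      rw [hsing]
      split_ifs with h
      · simp [h]
      · exact iff_of_false (by omega) h
    set t : ℕ → ℝ := fun k => T (Pi.single i k) with ht
    set d : ℕ → ℝ := fun k => (Face p (Pi.single i k) i).toReal with hd
    have hdnn : ∀ k, 0 ≤ d k := fun k => hFnn _ i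
    have htstep : ∀ k, t k = t (k+1) + d k := by
      intro k
      have h1 := hTface (Pi.single i k) i
      rw [hsingle_add k] at h1
      exact h1
    have hdrec : ∀ k : ℕ, lam i * d k ≤ φbar * d (k+1) := by
      intro k
      have hk := hKEY (Pi.single i (k+1))
      rw [hfilter k, Finset.sum_singleton, Finset.sum_singleton] at hk
      have hg : (Gap p (Pi.single i (k+1)) i).toReal = d k := by
        have h1 := hTsub (Pi.single i (k+1)) i
        rw [hsingle_sub k] at h1
        have h2 := htstep k
        have h3 := htstep (k+1)
        linarith
      rw [hg] at hk
      exact hk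
    have hdmono : Monotone d := by
      refine monotone_nat_of_le_succ fun k => ?_
      have h1 := hdrec k
      have h2 : φbar * d k ≤ lam i * d k := mul_le_mul_of_nonneg_right hge (hdnn k)
      exact (mul_le_mul_iff_right₀ hφbar).mp (le_trans h2 h1)
    have ht1 : t 0 = 1 := by
      have h0 : (Pi.single i 0 : Fin N → ℕ) = (fun _ => 0) := by
        funext j; rw [hsing]; split_ifs <;> rfl
      rw [ht]; simp only []; rw [h0]; exact hT0
    have htnn : ∀ k, 0 ≤ t k := fun k => hTnn _
    have htle : ∀ k, t k ≤ 1 := by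
      intro k; induction k with
      | zero => rw [ht1]
      | succ k ih =>
        have h1 := htstep k
        have h2 := hdnn k
        linarith
    have hKd : ∀ (j K : ℕ), (K : ℝ) * d j ≤ t j - t (j + K) := by
      intro j K
      induction K with
      | zero => simp
      | succ K ih =>
        have h1 : d j ≤ d (j + K) := hdmono (Nat.le_add_right j K)
        have h2 := htstep (j + K)
        have h3 : t (j + (K+1)) = t ((j + K) + 1) := by
          congr 1
        push_cast
        rw [h3]
        push_cast at ih
        linarith
    have hd0 : ∀ j, d j = 0 := by
      intro j
      by_contra hne
      have hpos : 0 < d j := lt_of_le_of_ne (hdnn j) (Ne.symm hne)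
      obtain ⟨K, hK⟩ := exists_nat_gt (2 / d j)
      have h1 := hKd j K
      have h2 : t j - t (j + K) ≤ 1 := by
        have := htnn (j + K); have := htle j; linarith
      have h3 : (2:ℝ) < K * d j := by
        rw [div_lt_iff₀ hpos] at hK; linarith
      linarith
    have hteq : ∀ k, t k = 1 := by
      intro k; induction k with
      | zero => exact ht1
      | succ k ih =>
        have h1 := htstep k
        rw [hd0 k] at h1
        linarith
    have hΘeq : ∀ k, Θ p (Pi.single i k) = 1 := by
      intro k
      have h1 : (Θ p (Pi.single i k)).toReal = (1 : ℝ≥0∞).toReal := by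
        rw [ENNReal.toReal_one]; exact hteq k
      exact (ENNReal.toReal_eq_toReal_iff' (hΘfin _) ENNReal.one_ne_top).mp h1
    have hpzero : ∀ y, p y = 0 := by
      intro y
      have hsplit : (∑' z : Fin N → ℕ, p z)
          = Θ p (Pi.single i (y i + 1)) + ∑' z : Fin N → ℕ,
              (if ¬∀ j, (Pi.single i (y i + 1) : Fin N → ℕ) j ≤ z j then p z else 0) := by
        calc ∑' z : Fin N → ℕ, p z
            = ∑' z : Fin N → ℕ,
              ((if ∀ j, (Pi.single i (y i + 1) : Fin N → ℕ) j ≤ z j then p z else 0)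
                + (if ¬∀ j, (Pi.single i (y i + 1) : Fin N → ℕ) j ≤ z j then p z else 0)) := by
              refine tsum_congr fun z => ?_
              by_cases h : ∀ j, (Pi.single i (y i + 1) : Fin N → ℕ) j ≤ z j
              · rw [if_pos h, if_neg (not_not_intro h), add_zero]
              · rw [if_neg h, if_pos h, zero_add]
          _ = _ := ENNReal.tsum_add
      rw [htotal, hΘeq (y i + 1)] at hsplit
      have hC : ∑' z : Fin N → ℕ,
          (if ¬∀ j, (Pi.single i (y i + 1) : Fin N → ℕ) j ≤ z j then p z else 0) = 0 := by
        have h2 : (1:ℝ≥0∞) + 0 = 1 + ∑' z : Fin N → ℕ,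
            (if ¬∀ j, (Pi.single i (y i + 1) : Fin N → ℕ) j ≤ z j then p z else 0) := by
          rw [add_zero]; exact hsplit
        exact ((ENNReal.add_right_inj ENNReal.one_ne_top).mp h2).symm
      have h0 := ENNReal.tsum_eq_zero.mp hC y
      have hcond : ¬∀ j, (Pi.single i (y i + 1) : Fin N → ℕ) j ≤ y j := by
        intro hcc
        have := hcc i
        rw [hsing] at this
        rw [if_pos rfl] at this
        omega
      rw [if_pos hcond] at h0
      exact h0
    have hcontr : (1:ℝ) = 0 := by
      rw [← hπsum]
      have hz : ∀ y : Fin N → ℕ, π y = 0 := fun y =>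
        le_antisymm (ENNReal.ofReal_eq_zero.mp (hpzero y)) (hπpos y)
      calc ∑' y : Fin N → ℕ, π y = ∑' _y : Fin N → ℕ, (0:ℝ) := tsum_congr hz
        _ = 0 := tsum_zero
    norm_num at hcontr
    -- the comparison geometric function u
  set r : Fin N → ℝ := fun i => lam i / φbar with hrdef
  have hrpos : ∀ i, 0 < r i := fun i => div_pos (hlam i) hφbar
  have hrlt1 : ∀ i, r i < 1 := fun i => (div_lt_one hφbar).mpr (hrlt i)
  set u : (Fin N → ℕ) → ℝ := fun v => ∏ j, r j ^ (v j) with hudef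
  have hupos : ∀ v, 0 < u v := fun v => Finset.prod_pos fun j _ => pow_pos (hrpos j) _
  have husplit : ∀ (v : Fin N → ℕ) (i : Fin N),
      u v = r i ^ (v i) * ∏ j ∈ Finset.univ.erase i, r j ^ (v j) := fun v i =>
    (Finset.mul_prod_erase Finset.univ _ (Finset.mem_univ i)).symm
  have hsub_apply : ∀ (v : Fin N → ℕ) (i j : Fin N),
      (v - Pi.single i 1 : Fin N → ℕ) j = v j - (if j = i then 1 else 0) := fun v i j => by
    rw [← Pi.single_apply i (1:ℕ) j]; rfl
  have hadd_apply : ∀ (v : Fin N → ℕ) (i j : Fin N),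
      (v + Pi.single i 1 : Fin N → ℕ) j = v j + (if j = i then 1 else 0) := fun v i j => by
    rw [← Pi.single_apply i (1:ℕ) j]; rfl
  have husub : ∀ (v : Fin N → ℕ) (i : Fin N), 1 ≤ v i →
      u ((v : Fin N → ℕ) - Pi.single i 1) * r i = u v := by
    intro v i hvi
    rw [husplit ((v : Fin N → ℕ) - Pi.single i 1) i, husplit v i]
    have he : ∏ j ∈ Finset.univ.erase i, r j ^ ((v - Pi.single i 1 : Fin N → ℕ) j)
        = ∏ j ∈ Finset.univ.erase i, r j ^ (v j) := by
      refine Finset.prod_congr rfl fun j hj => ?_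
      rw [hsub_apply, if_neg (Finset.ne_of_mem_erase hj), Nat.sub_zero]
    rw [he, hsub_apply, if_pos rfl]
    have hp1 : r i ^ (v i - 1) * r i = r i ^ (v i) := by
      rw [← pow_succ]
      congr 1
      omega
    calc r i ^ (v i - 1) * (∏ j ∈ Finset.univ.erase i, r j ^ (v j)) * r i
        = (r i ^ (v i - 1) * r i) * ∏ j ∈ Finset.univ.erase i, r j ^ (v j) := by ring
      _ = r i ^ (v i) * ∏ j ∈ Finset.univ.erase i, r j ^ (v j) := by rw [hp1]
  have huadd : ∀ (v : Fin N → ℕ) (i : Fin N),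
      u ((v : Fin N → ℕ) + Pi.single i 1) = u v * r i := by
    intro v i
    rw [husplit ((v : Fin N → ℕ) + Pi.single i 1) i, husplit v i]
    have he : ∏ j ∈ Finset.univ.erase i, r j ^ ((v + Pi.single i 1 : Fin N → ℕ) j)
        = ∏ j ∈ Finset.univ.erase i, r j ^ (v j) := by
      refine Finset.prod_congr rfl fun j hj => ?_
      rw [hadd_apply, if_neg (Finset.ne_of_mem_erase hj), Nat.add_zero]
    rw [he, hadd_apply, if_pos rfl, pow_succ]
    ring
  have hub : ∀ (v : Fin N → ℕ) (j : Fin N), u v ≤ r j ^ (v j) := by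
    intro v j
    rw [husplit v j]
    have h1 : ∏ k ∈ Finset.univ.erase j, r k ^ (v k) ≤ 1 :=
      Finset.prod_le_one (fun k _ => pow_nonneg (le_of_lt (hrpos k)) _)
        (fun k _ => pow_le_one₀ (le_of_lt (hrpos k)) (le_of_lt (hrlt1 k)))
    calc r j ^ (v j) * ∏ k ∈ Finset.univ.erase j, r k ^ (v k)
        ≤ r j ^ (v j) * 1 :=
          mul_le_mul_of_nonneg_left h1 (pow_nonneg (le_of_lt (hrpos j)) _)
      _ = r j ^ (v j) := mul_one _
  have hu0 : u (fun _ => 0) = 1 := by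
    rw [hudef]; simp
  -- main comparison : u ≤ T everywhere (discrete minimum principle)
  have hmain : ∀ v : Fin N → ℕ, u v ≤ T v := by
    by_contra hcon
    push_neg at hcon
    obtain ⟨v₀, hv₀⟩ := hcon
    have hNne : Nonempty (Fin N) := by
      rcases isEmpty_or_nonempty (Fin N) with hN | hN
      · exfalso
        have hv00 : v₀ = (fun _ => 0) := funext fun j => hN.elim j
        rw [hv00, hT0, hu0] at hv₀
        exact lt_irrefl 1 hv₀
      · exact hN
    have huniv_ne : (Finset.univ : Finset (Fin N)).Nonempty := Finset.univ_nonempty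
    set ρ : ℝ := Finset.univ.sup' huniv_ne r with hρ
    have hρlt1 : ρ < 1 := (Finset.sup'_lt_iff huniv_ne).mpr fun j _ => hrlt1 j
    have hρle : ∀ j, r j ≤ ρ := fun j => Finset.le_sup' r (Finset.mem_univ j)
    have hρnn : (0:ℝ) ≤ ρ :=
      le_trans (le_of_lt (hrpos (Classical.arbitrary _))) (hρle _)
    set ε : ℝ := u v₀ - T v₀ with hε
    have hεpos : 0 < ε := by rw [hε]; linarith
    obtain ⟨K₀, hK₀⟩ := exists_pow_lt_of_lt_one hεpos hρlt1
    set R : ℕ := K₀ + ∑ j, v₀ j with hR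
    set Box : Finset (Fin N → ℕ) := Fintype.piFinset (fun _ => Finset.range (R+1)) with hBox
    have hv₀mem : v₀ ∈ Box := by
      rw [hBox]
      refine Fintype.mem_piFinset.mpr fun j => Finset.mem_range.mpr ?_
      have := Finset.single_le_sum (f := v₀) (fun k _ => Nat.zero_le _)
        (Finset.mem_univ j)
      omega
    have hBne : Box.Nonempty := ⟨v₀, hv₀mem⟩
    set w : (Fin N → ℕ) → ℝ := fun v => T v - u v with hw
    set m : ℝ := Box.inf' hBne w with hm
    have hmlev₀ : m ≤ w v₀ := Finset.inf'_le w hv₀mem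
    have hwv₀ : w v₀ = -ε := by rw [hw]; simp only []; rw [hε]; ring
    have hmneg : m ≤ -ε := by rw [← hwv₀]; exact hmlev₀
    have hglobal : ∀ v, m ≤ w v := by
      intro v
      by_cases hvB : ∀ j, v j ≤ R
      · exact Finset.inf'_le w (Fintype.mem_piFinset.mpr fun j =>
          Finset.mem_range.mpr (by have := hvB j; omega))
      · push_neg at hvB
        obtain ⟨j, hj⟩ := hvB
        have h1 : u v ≤ ρ ^ (v j) :=
          le_trans (hub v j) (pow_le_pow_left₀ (le_of_lt (hrpos j)) (hρle j) _)
        have h2 : ρ ^ (v j) ≤ ρ ^ K₀ :=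
          pow_le_pow_of_le_one hρnn (le_of_lt hρlt1) (by omega)
        have h3 : u v < ε := lt_of_le_of_lt (le_trans h1 h2) hK₀
        have h4 : -ε < w v := by
          rw [hw]; simp only []
          have := hTnn v
          linarith
        linarith
    have hstep : ∀ (v : Fin N → ℕ) (i : Fin N), 1 ≤ v i → w v = m →
        w ((v : Fin N → ℕ) - Pi.single i 1) = m := by
      intro v i hvi hwv
      have hkey := hKEY v
      have hiS : i ∈ Finset.univ.filter (fun j => 1 ≤ v j) :=
        Finset.mem_filter.mpr ⟨Finset.mem_univ i, hvi⟩
      have hTv : T v = m + u v := by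
        have h := hwv
        rw [hw] at h
        simp only [] at h
        linarith
      have hterm : ∀ j ∈ Finset.univ.filter (fun j => 1 ≤ v j),
          lam j * (Gap p v j).toReal
            = lam j * (w ((v : Fin N → ℕ) - Pi.single j 1) - m) + u v * (φbar - lam j) := by
        intro j hjS
        have hj1 : 1 ≤ v j := (Finset.mem_filter.mp hjS).2
        have h1 := hTsub v j
        have h2 := husub v j hj1
        have h3 : lam j * u ((v : Fin N → ℕ) - Pi.single j 1) = φbar * u v := by
          have hl : lam j = φbar * r j := by
            rw [hrdef]; field_simp
          rw [hl]
          calc φbar * r j * u ((v : Fin N → ℕ) - Pi.single j 1)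
              = φbar * (u ((v : Fin N → ℕ) - Pi.single j 1) * r j) := by ring
            _ = φbar * u v := by rw [h2]
        have hTsubj : T ((v : Fin N → ℕ) - Pi.single j 1)
            = w ((v : Fin N → ℕ) - Pi.single j 1) + u ((v : Fin N → ℕ) - Pi.single j 1) := by
          rw [hw]; simp only []; ring
        have hgap : (Gap p v j).toReal
            = w ((v : Fin N → ℕ) - Pi.single j 1)
              + u ((v : Fin N → ℕ) - Pi.single j 1) - m - u v := by
          linarith
        rw [hgap]
        linear_combination h3
      have hfacej : ∀ j ∈ Finset.univ.filter (fun j => 1 ≤ v j),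
          φbar * (Face p v j).toReal ≤ u v * (φbar - lam j) := by
        intro j hjS
        have h1 := hTface v j
        have h2 := huadd v j
        have h3 : T ((v : Fin N → ℕ) + Pi.single j 1)
            = w ((v : Fin N → ℕ) + Pi.single j 1) + u ((v : Fin N → ℕ) + Pi.single j 1) := by
          rw [hw]; simp only []; ring
        have h4 := hglobal ((v : Fin N → ℕ) + Pi.single j 1)
        have h5 : (Face p v j).toReal ≤ u v - u v * r j := by
          rw [h2] at h3
          linarith
        have h6 : φbar * (u v - u v * r j) = u v * (φbar - lam j) := by
          have hl : φbar * r j = lam j := by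
            rw [hrdef]; field_simp
          linear_combination (-(u v)) * hl
        calc φbar * (Face p v j).toReal
            ≤ φbar * (u v - u v * r j) := mul_le_mul_of_nonneg_left h5 (le_of_lt hφbar)
          _ = u v * (φbar - lam j) := h6
      have hsum1 : ∑ j ∈ Finset.univ.filter (fun j => 1 ≤ v j),
          (lam j * (w ((v : Fin N → ℕ) - Pi.single j 1) - m) + u v * (φbar - lam j))
          ≤ ∑ j ∈ Finset.univ.filter (fun j => 1 ≤ v j), u v * (φbar - lam j) := by
        calc ∑ j ∈ Finset.univ.filter (fun j => 1 ≤ v j),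
            (lam j * (w ((v : Fin N → ℕ) - Pi.single j 1) - m) + u v * (φbar - lam j))
            = ∑ j ∈ Finset.univ.filter (fun j => 1 ≤ v j), lam j * (Gap p v j).toReal :=
              Finset.sum_congr rfl fun j hj => (hterm j hj).symm
          _ ≤ φbar * ∑ j ∈ Finset.univ.filter (fun j => 1 ≤ v j), (Face p v j).toReal := hkey
          _ = ∑ j ∈ Finset.univ.filter (fun j => 1 ≤ v j), φbar * (Face p v j).toReal :=
              Finset.mul_sum _ _ _
          _ ≤ ∑ j ∈ Finset.univ.filter (fun j => 1 ≤ v j), u v * (φbar - lam j) :=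
              Finset.sum_le_sum hfacej
      have hsum2 : ∑ j ∈ Finset.univ.filter (fun j => 1 ≤ v j),
          lam j * (w ((v : Fin N → ℕ) - Pi.single j 1) - m) ≤ 0 := by
        rw [Finset.sum_add_distrib] at hsum1
        linarith
      have hnnterms : ∀ j ∈ Finset.univ.filter (fun j => 1 ≤ v j),
          0 ≤ lam j * (w ((v : Fin N → ℕ) - Pi.single j 1) - m) := fun j _ =>
        mul_nonneg (le_of_lt (hlam j))
          (by have := hglobal ((v : Fin N → ℕ) - Pi.single j 1); linarith)
      have hzero := (Finset.sum_eq_zero_iff_of_nonneg hnnterms).mp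
        (le_antisymm hsum2 (Finset.sum_nonneg hnnterms))
      have hzi := hzero i hiS
      rcases mul_eq_zero.mp hzi with h | h
      · exact absurd h (ne_of_gt (hlam i))
      · linarith
    obtain ⟨vs, hvsmem, hvs⟩ := Finset.exists_mem_eq_inf' hBne w
    have hdesc : ∀ k, ∀ v : Fin N → ℕ, (∑ j, v j) ≤ k → w v = m → False := by
      intro k
      induction k with
      | zero =>
        intro v hv hwv
        have hv0 : v = (fun _ => 0) := funext fun j => by
          have := Finset.single_le_sum (f := v) (fun k _ => Nat.zero_le _)
            (Finset.mem_univ j)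
          omega
        rw [hv0] at hwv
        have hz : w (fun _ => 0) = 0 := by
          rw [hw]; simp only []; rw [hT0, hu0]; ring
        rw [hz] at hwv
        linarith
      | succ k ih =>
        intro v hv hwv
        by_cases h0 : ∑ j, v j = 0
        · have hv0 : v = (fun _ => 0) := funext fun j => by
            have := Finset.single_le_sum (f := v) (fun k _ => Nat.zero_le _)
              (Finset.mem_univ j)
            omega
          rw [hv0] at hwv
          have hz : w (fun _ => 0) = 0 := by
            rw [hw]; simp only []; rw [hT0, hu0]; ring
          rw [hz] at hwv
          linarith
        · have hex : ∃ i : Fin N, 1 ≤ v i := by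
            by_contra hno
            push_neg at hno
            exact h0 (Finset.sum_eq_zero fun j _ => by have := hno j; omega)
          obtain ⟨i, hi⟩ := hex
          have hstepv := hstep v i hi hwv
          have hsum : (∑ j, (v - Pi.single i 1 : Fin N → ℕ) j) ≤ k := by
            have e1 : (∑ j, (v - Pi.single i 1 : Fin N → ℕ) j)
                = (v i - 1) + ∑ j ∈ Finset.univ.erase i,
                    (v - Pi.single i 1 : Fin N → ℕ) j := by
              rw [← Finset.add_sum_erase Finset.univ _ (Finset.mem_univ i)]
              congr 1
              rw [hsub_apply, if_pos rfl]
            have e2 : ∑ j ∈ Finset.univ.erase i, (v - Pi.single i 1 : Fin N → ℕ) j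
                = ∑ j ∈ Finset.univ.erase i, v j :=
              Finset.sum_congr rfl fun j hj => by
                rw [hsub_apply, if_neg (Finset.ne_of_mem_erase hj), Nat.sub_zero]
            have e3 : (∑ j, v j) = v i + ∑ j ∈ Finset.univ.erase i, v j :=
              (Finset.add_sum_erase Finset.univ _ (Finset.mem_univ i)).symm
            omega
          exact ih _ hsum hstepv
    exact hdesc (∑ j, vs j) vs le_rfl hvs.symm
  -- final assembly
  refine ⟨1, one_pos, fun n => ?_⟩
  rw [one_mul]
  have hnn : ∀ y, 0 ≤ Set.indicator {y : Fin N → ℕ | ∀ i, n * x i ≤ y i} π y := fun y =>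
    Set.indicator_nonneg (fun z _ => hπpos z) y
  have h1 : Θ p (fun i => n * x i)
      = ENNReal.ofReal (∑' y : Fin N → ℕ,
          Set.indicator {y : Fin N → ℕ | ∀ i, n * x i ≤ y i} π y) := by
    rw [ENNReal.ofReal_tsum_of_nonneg hnn (hsummable.indicator _)]
    refine tsum_congr fun y => ?_
    by_cases h : ∀ i, n * x i ≤ y i
    · rw [if_pos h, Set.indicator_of_mem (by exact h)]
    · rw [if_neg h, Set.indicator_of_notMem (by exact h),
        ENNReal.ofReal_zero]
  have hTgoal : (∑' y : {y : Fin N → ℕ // ∀ i, n * x i ≤ y i}, π y) = T (fun i => n * x i) := by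
    calc (∑' y : {y : Fin N → ℕ // ∀ i, n * x i ≤ y i}, π y)
        = ∑' y : Fin N → ℕ, Set.indicator {y : Fin N → ℕ | ∀ i, n * x i ≤ y i} π y :=
          tsum_subtype _ π
      _ = T (fun i => n * x i) := by
          rw [hT]; simp only []
          rw [h1, ENNReal.toReal_ofReal (tsum_nonneg hnn)]
  rw [hTgoal]
  refine le_trans ?_ (hmain (fun i => n * x i))
  have hc0 : (0:ℝ) ≤ (⨅ i, lam i) / φbar :=
    div_nonneg (Real.iInf_nonneg fun i => le_of_lt (hlam i)) (le_of_lt hφbar)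
  have hbdd : BddBelow (Set.range lam) := by
    refine ⟨0, ?_⟩
    rintro z ⟨i, rfl⟩
    exact le_of_lt (hlam i)
  have hcle : ∀ i, (⨅ j, lam j) / φbar ≤ r i := fun i => by
    rw [hrdef]
    exact div_le_div_of_nonneg_right (ciInf_le hbdd i) (le_of_lt hφbar)
  calc ((⨅ i, lam i) / φbar) ^ (n * ∑ i, x i)
      = ((⨅ i, lam i) / φbar) ^ (∑ i, n * x i) := by rw [← Finset.mul_sum]
    _ = ∏ i, ((⨅ j, lam j) / φbar) ^ (n * x i) := (Finset.prod_pow_eq_pow_sum _ _ _).symm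
    _ ≤ ∏ i, r i ^ (n * x i) :=
        Finset.prod_le_prod (fun i _ => pow_nonneg hc0 _)
          (fun i _ => pow_le_pow_left₀ hc0 (hcle i) _)
    _ = u (fun i => n * x i) := by rw [hudef]
end
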